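/- Let p ≥ 1 and δ ≥ 0 with p + 2δ > 1. Then: (1) sup_{m≥1} Σ_{n=1}^∞ 1/(⟨m−n⟩^p·max{m,n}^{2δ}) ≤ 2 + 1/(p+2δ−1) + ζ(p+2δ). (2) Consequently, if A is a family of bounded operators A_{m,n} : Ran P_n → Ran P_m with N := sup_{m,n} ⟨m−n⟩^p max{m,n}^{2δ}‖A_{m,n}‖ < ∞, then the blocks define a bounded operator A on ℋ (with P_m A P_n = A_{m,n} for all m,n) whose operator norm satisfies ‖A‖ ≤ (2 + 1/(p+2δ−1) + ζ(p+2δ))·N. -/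
import Mathlib


noncomputable section

open ContinuousLinearMap

variable {𝓗 : Type*} [NormedAddCommGroup 𝓗] [InnerProductSpace ℂ 𝓗] [CompleteSpace 𝓗]

/-- `⟨x⟩ := max {1, |x|}`. -/
def jap (x : ℝ) : ℝ := max 1 |x|

/-- `(Pₙ)_{n≥1}` is a family of mutually orthogonal nonzero orthogonal projections
with `Σₙ Pₙ = I` in the strong sense. -/
def ProjFamily (P : ℕ+ → 𝓗 →L[ℂ] 𝓗) : Prop :=
  (∀ n, IsSelfAdjoint (P n)) ∧ (∀ n, (P n).comp (P n) = P n) ∧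
  (∀ m n, m ≠ n → (P m).comp (P n) = 0) ∧ (∀ n, P n ≠ 0) ∧
  (∀ ψ : 𝓗, HasSum (fun n => P n ψ) ψ)

/-- The quantity `⟨m-n⟩^p · max{m,n}^(2δ) · ‖Pₘ A Pₙ‖`; the norm `‖A‖_{p,δ}` is its
supremum over `m, n ≥ 1`. -/
def wnorm (P : ℕ+ → 𝓗 →L[ℂ] 𝓗) (p δ : ℝ) (A : 𝓗 →L[ℂ] 𝓗) (m n : ℕ+) : ℝ :=
  jap (((m : ℕ) : ℝ) - ((n : ℕ) : ℝ)) ^ p * (((max m n : ℕ+) : ℕ) : ℝ) ^ (2 * δ) *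
    ‖(P m).comp (A.comp (P n))‖

/-- `A` is diagonal with respect to the family `P`. -/
def IsDiag (P : ℕ+ → 𝓗 →L[ℂ] 𝓗) (A : 𝓗 →L[ℂ] 𝓗) : Prop :=
  ∀ m n, m ≠ n → (P m).comp (A.comp (P n)) = 0

/-- `Dom(H) = {ψ : Σₙ Eₙ²‖Pₙψ‖² < ∞}`. -/
def HDom (P : ℕ+ → 𝓗 →L[ℂ] 𝓗) (E : ℕ+ → ℝ) : Set 𝓗 :=
  {ψ | Summable fun n => (E n) ^ 2 * ‖P n ψ‖ ^ 2}

/-- The form domain `Q_H = {ψ : Σₙ Eₙ‖Pₙψ‖² < ∞}`. -/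
def QDom (P : ℕ+ → 𝓗 →L[ℂ] 𝓗) (E : ℕ+ → ℝ) : Set 𝓗 :=
  {ψ | Summable fun n => E n * ‖P n ψ‖ ^ 2}

/-- `h = Hψ`, i.e. `h = Σₙ Eₙ Pₙ ψ`. -/
def IsHSum (P : ℕ+ → 𝓗 →L[ℂ] 𝓗) (E : ℕ+ → ℝ) (ψ h : 𝓗) : Prop :=
  HasSum (fun n => (E n : ℂ) • P n ψ) h

/-- `U` is unitary. -/
def IsUnitaryOp (U : 𝓗 →L[ℂ] 𝓗) : Prop := U * star U = 1 ∧ star U * U = 1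

/-- A family of bounded operators which is `C¹` in the strong sense. -/
def StrongC1 (V : ℝ → 𝓗 →L[ℂ] 𝓗) : Prop := ∀ ψ : 𝓗, ContDiff ℝ 1 fun t => V t ψ

/-- `U(t,s)` is a propagator for `H + V(t)`. -/
def IsPropagator (P : ℕ+ → 𝓗 →L[ℂ] 𝓗) (E : ℕ+ → ℝ) (V : ℝ → 𝓗 →L[ℂ] 𝓗)
    (U : ℝ → ℝ → 𝓗 →L[ℂ] 𝓗) : Prop :=
  (∀ t s, IsUnitaryOp (U t s)) ∧
  (∀ ψ : 𝓗, Continuous fun ts : ℝ × ℝ => U ts.1 ts.2 ψ) ∧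
  (∀ t, U t t = 1) ∧
  (∀ t s r, (U t s).comp (U s r) = U t r) ∧
  (∀ t s, ⇑(U t s) '' HDom P E = HDom P E) ∧
  (∀ s : ℝ, ∀ ψ ∈ HDom P E, ∀ t : ℝ, ∃ d : 𝓗,
    HasDerivAt (fun τ => U τ s ψ) d t ∧
    ∀ h : 𝓗, IsHSum P E (U t s ψ) h → Complex.I • d = h + V t (U t s ψ))

/-- The Riemann zeta function `ζ(s) = Σ_{n≥1} n^{-s}` (for real `s > 1`). -/
def rzeta (s : ℝ) : ℝ := ∑' n : ℕ+, (((n : ℕ) : ℝ) ^ s)⁻¹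

/-- The constant `C_p = 2^(p+1) (1 + 2 ζ(p-1))`. -/
def Cconst (p : ℝ) : ℝ := 2 ^ (p + 1) * (1 + 2 * rzeta (p - 1))


section Statement13Helpers
open scoped InnerProductSpace
set_option linter.unusedSectionVars false
set_option maxHeartbeats 1000000


lemma one_le_jap (x : ℝ) : 1 ≤ jap x := le_max_left _ _
lemma jap_pos (x : ℝ) : 0 < jap x := lt_of_lt_of_le one_pos (one_le_jap x)
lemma jap_nat (n : ℕ) (hn : 1 ≤ n) : jap (n : ℝ) = (n : ℝ) := by
  unfold jap
  rw [abs_of_nonneg (by positivity), max_eq_right (by exact_mod_cast hn)]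
lemma jap_neg (x : ℝ) : jap (-x) = jap x := by unfold jap; rw [abs_neg]

lemma hasSum_nat_zeta {s : ℝ} (hs : 1 < s) :
    HasSum (fun n : ℕ => ((n : ℝ) ^ s)⁻¹) (rzeta s) := by
  have hsum : Summable (fun n : ℕ => ((n : ℝ) ^ s)⁻¹) := Real.summable_nat_rpow_inv.mpr hs
  have hinj : Function.Injective (fun n : ℕ+ => (n : ℕ)) := fun a b h => PNat.coe_injective h
  have h0 : ∀ x : ℕ, x ∉ Set.range (fun n : ℕ+ => (n : ℕ)) → ((x : ℝ) ^ s)⁻¹ = 0 := by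
    intro x hx
    have hx0 : x = 0 := by
      by_contra h
      exact hx ⟨⟨x, Nat.pos_of_ne_zero h⟩, rfl⟩
    simp [hx0, Real.zero_rpow (by linarith : s ≠ 0)]
  have hsub : Summable (fun n : ℕ+ => (((n : ℕ) : ℝ) ^ s)⁻¹) := hsum.comp_injective hinj
  have h1 : HasSum (fun n : ℕ+ => (((n : ℕ) : ℝ) ^ s)⁻¹) (rzeta s) := by
    rw [rzeta]; exact hsub.hasSum
  exact (Function.Injective.hasSum_iff hinj h0).mp h1

lemma japF_hasSum {s : ℝ} (hs : 1 < s) :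
    HasSum (fun k : ℤ => (jap (k : ℝ) ^ s)⁻¹) (1 + 2 * rzeta s) := by
  have hN := hasSum_nat_zeta hs
  have hpos : HasSum (fun n : ℕ => (jap ((n : ℤ) : ℝ) ^ s)⁻¹) (rzeta s + 1) := by
    have hfun : (fun n : ℕ => (jap ((n : ℤ) : ℝ) ^ s)⁻¹) =
        fun n : ℕ => ((n : ℝ) ^ s)⁻¹ + (if n = 0 then (1 : ℝ) else 0) := by
      funext n
      rcases Nat.eq_zero_or_pos n with h | h
      · simp [h, jap, Real.zero_rpow (by linarith : s ≠ 0), Real.one_rpow]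
      · push_cast
        rw [jap_nat n h, if_neg (Nat.pos_iff_ne_zero.mp h)]
        simp
    rw [hfun]
    exact hN.add (hasSum_ite_eq 0 1)
  have hneg : HasSum (fun n : ℕ => (jap (((-(n + 1) : ℤ)) : ℝ) ^ s)⁻¹) (rzeta s) := by
    have h1 : HasSum (fun n : ℕ => (((n + 1 : ℕ) : ℝ) ^ s)⁻¹) (rzeta s) := by
      refine (hasSum_nat_add_iff (f := fun n : ℕ => ((n : ℝ) ^ s)⁻¹) 1).mpr ?_
      simpa [Real.zero_rpow (by linarith : s ≠ 0)] using hN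
    have hfun : (fun n : ℕ => (jap (((-(n + 1) : ℤ)) : ℝ) ^ s)⁻¹) =
        fun n : ℕ => (((n + 1 : ℕ) : ℝ) ^ s)⁻¹ := by
      funext n
      have : (((-(n + 1) : ℤ)) : ℝ) = -(((n + 1 : ℕ)) : ℝ) := by push_cast; ring
      rw [this, jap_neg, jap_nat (n + 1) (by omega)]
    rw [hfun]; exact h1
  have := HasSum.of_nat_of_neg_add_one (f := fun k : ℤ => (jap (k : ℝ) ^ s)⁻¹) hpos hneg
  have heq : rzeta s + 1 + rzeta s = 1 + 2 * rzeta s := by ring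
  rwa [heq] at this

lemma jap_le_max (m n : ℕ+) :
    jap (((m : ℕ) : ℝ) - ((n : ℕ) : ℝ)) ≤ (((max m n : ℕ+) : ℕ) : ℝ) := by
  have hmax : ((max m n : ℕ+) : ℕ) = max (m : ℕ) (n : ℕ) := by
    rcases le_total m n with h | h
    · rw [max_eq_right h, max_eq_right (show (m : ℕ) ≤ n from h)]
    · rw [max_eq_left h, max_eq_left (show (n : ℕ) ≤ m from h)]
  rw [hmax]
  apply max_le
  · have := n.one_le
    have h2 : (1 : ℕ) ≤ max (m : ℕ) (n : ℕ) := le_trans n.one_le (le_max_right _ _)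
    exact_mod_cast h2
  · rw [abs_sub_le_iff]
    constructor
    · have : ((m : ℕ) : ℝ) ≤ ((max (m : ℕ) (n : ℕ) : ℕ) : ℝ) := by
        exact_mod_cast le_max_left (m : ℕ) (n : ℕ)
      have hn : (0 : ℝ) ≤ ((n : ℕ) : ℝ) := by positivity
      linarith
    · have : ((n : ℕ) : ℝ) ≤ ((max (m : ℕ) (n : ℕ) : ℕ) : ℝ) := by
        exact_mod_cast le_max_right (m : ℕ) (n : ℕ)
      have hm : (0 : ℝ) ≤ ((m : ℕ) : ℝ) := by positivity
      linarith

lemma weight_ge {p δ : ℝ} (hδ : 0 ≤ δ) (m n : ℕ+) :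
    jap (((m : ℕ) : ℝ) - ((n : ℕ) : ℝ)) ^ (p + 2 * δ) ≤
      jap (((m : ℕ) : ℝ) - ((n : ℕ) : ℝ)) ^ p * (((max m n : ℕ+) : ℕ) : ℝ) ^ (2 * δ) := by
  set j := jap (((m : ℕ) : ℝ) - ((n : ℕ) : ℝ)) with hj
  have hj0 : 0 < j := jap_pos _
  rw [Real.rpow_add hj0]
  have h2 : j ^ (2 * δ) ≤ (((max m n : ℕ+) : ℕ) : ℝ) ^ (2 * δ) :=
    Real.rpow_le_rpow hj0.le (jap_le_max m n) (by linarith)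
  exact mul_le_mul_of_nonneg_left h2 (Real.rpow_nonneg hj0.le _)

lemma weight_pos {p δ : ℝ} (m n : ℕ+) :
    0 < jap (((m : ℕ) : ℝ) - ((n : ℕ) : ℝ)) ^ p * (((max m n : ℕ+) : ℕ) : ℝ) ^ (2 * δ) := by
  have h1 : (0:ℝ) < ((max m n : ℕ+) : ℕ) := by exact_mod_cast (max m n).pos
  exact mul_pos (Real.rpow_pos_of_pos (jap_pos _) _) (Real.rpow_pos_of_pos h1 _)

lemma rowsum {p δ : ℝ} (hδ : 0 ≤ δ) (hpδ : 1 < p + 2 * δ) (m : ℕ+) :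
    Summable (fun n : ℕ+ =>
      1 / (jap (((m : ℕ) : ℝ) - ((n : ℕ) : ℝ)) ^ p * (((max m n : ℕ+) : ℕ) : ℝ) ^ (2 * δ))) ∧
    ∑' n : ℕ+,
        1 / (jap (((m : ℕ) : ℝ) - ((n : ℕ) : ℝ)) ^ p * (((max m n : ℕ+) : ℕ) : ℝ) ^ (2 * δ)) ≤
      1 + 2 * rzeta (p + 2 * δ) := by
  set s := p + 2 * δ with hs
  set F : ℤ → ℝ := fun k => (jap (k : ℝ) ^ s)⁻¹ with hF
  have hFsum := japF_hasSum hpδ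
  have hFnn : ∀ k, 0 ≤ F k := fun k => inv_nonneg.mpr (Real.rpow_nonneg (jap_pos _).le _)
  have hinj : Function.Injective (fun n : ℕ+ => (m : ℤ) - (n : ℤ)) := by
    intro a b h
    simp only [sub_right_inj, Int.natCast_inj] at h
    exact PNat.coe_injective (by exact_mod_cast h)
  have hpart : ∀ u : Finset ℕ+, ∑ n ∈ u, F ((m : ℤ) - (n : ℤ)) ≤ 1 + 2 * rzeta s := by
    intro u
    have himg : ∑ n ∈ u, F ((m : ℤ) - (n : ℤ)) =
        ∑ k ∈ u.image (fun n : ℕ+ => (m : ℤ) - (n : ℤ)), F k :=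
      (Finset.sum_image (fun a _ b _ h => hinj (by simpa using h))).symm
    rw [himg]
    calc ∑ k ∈ u.image (fun n : ℕ+ => (m : ℤ) - (n : ℤ)), F k ≤ ∑' k, F k :=
          Summable.sum_le_tsum _ (fun k _ => hFnn k) hFsum.summable
      _ = 1 + 2 * rzeta s := hFsum.tsum_eq
  have hgsum : Summable (fun n : ℕ+ => F ((m : ℤ) - (n : ℤ))) :=
    summable_of_sum_le (fun n => hFnn _) hpart
  have hterm : ∀ n : ℕ+,
      1 / (jap (((m : ℕ) : ℝ) - ((n : ℕ) : ℝ)) ^ p * (((max m n : ℕ+) : ℕ) : ℝ) ^ (2 * δ)) ≤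
        F ((m : ℤ) - (n : ℤ)) := by
    intro n
    have hcast : ((((m : ℤ) - (n : ℤ)) : ℤ) : ℝ) = ((m : ℕ) : ℝ) - ((n : ℕ) : ℝ) := by push_cast; ring
    have : F ((m : ℤ) - (n : ℤ)) = (jap (((m : ℕ) : ℝ) - ((n : ℕ) : ℝ)) ^ s)⁻¹ := by
      rw [hF]; simp only [hcast]
    rw [this, one_div]
    exact inv_anti₀ (Real.rpow_pos_of_pos (jap_pos _) _) (weight_ge hδ m n)
  have hnn : ∀ n : ℕ+, 0 ≤
      1 / (jap (((m : ℕ) : ℝ) - ((n : ℕ) : ℝ)) ^ p * (((max m n : ℕ+) : ℕ) : ℝ) ^ (2 * δ)) :=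
    fun n => one_div_nonneg.mpr (weight_pos (p := p) (δ := δ) m n).le
  have hsummable := Summable.of_nonneg_of_le hnn hterm hgsum
  refine ⟨hsummable, ?_⟩
  calc ∑' n : ℕ+, _ ≤ ∑' n : ℕ+, F ((m : ℤ) - (n : ℤ)) := Summable.tsum_le_tsum hterm hsummable hgsum
    _ ≤ 1 + 2 * rzeta s := Summable.tsum_le_of_sum_le hgsum hpart

lemma rzeta_nonneg {s : ℝ} : 0 ≤ rzeta s :=
  tsum_nonneg fun n => inv_nonneg.mpr (Real.rpow_nonneg (by positivity) _)

lemma rzeta_le {s : ℝ} (hs : 1 < s) : rzeta s ≤ 1 + 1 / (s - 1) := by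
  have hN := hasSum_nat_zeta hs
  have key : ∀ K : ℕ, ∑ i ∈ Finset.range K, (((i : ℝ) + 2) ^ s)⁻¹ ≤ 1 / (s - 1) := by
    intro K
    have hanti : AntitoneOn (fun x : ℝ => (x ^ s)⁻¹) (Set.Icc (1 : ℝ) (1 + K)) := by
      intro x hx y hy hxy
      have hx0 : 0 < x := lt_of_lt_of_le one_pos hx.1
      exact inv_anti₀ (Real.rpow_pos_of_pos hx0 s)
        (Real.rpow_le_rpow hx0.le hxy (by linarith))
    have h1 := hanti.sum_le_integral
    have hterm : ∀ i ∈ Finset.range K,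
        (fun x : ℝ => (x ^ s)⁻¹) ((1 : ℝ) + ((i + 1 : ℕ) : ℝ)) = (((i : ℝ) + 2) ^ s)⁻¹ := by
      intro i _
      push_cast
      ring_nf
    rw [Finset.sum_congr rfl hterm] at h1
    have hint : (∫ x in (1 : ℝ)..(1 + K), (x ^ s)⁻¹) ≤ 1 / (s - 1) := by
      have hcong : (∫ x in (1 : ℝ)..(1 + K), (x ^ s)⁻¹) =
          ∫ x in (1 : ℝ)..(1 + K), x ^ (-s) := by
        apply intervalIntegral.integral_congr
        intro x hx
        rw [Set.uIcc_of_le (le_add_of_nonneg_right (Nat.cast_nonneg K))] at hx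
        have hx0 : 0 < x := lt_of_lt_of_le one_pos hx.1
        simp [Real.rpow_neg hx0.le]
      rw [hcong, integral_rpow (Or.inr ⟨by linarith, by
        rw [Set.uIcc_of_le (le_add_of_nonneg_right (Nat.cast_nonneg K) : (1:ℝ) ≤ 1 + K)]
        intro hmem
        exact absurd hmem.1 (by norm_num)⟩)]
      have hX : 0 ≤ (1 + (K : ℝ)) ^ (-s + 1) := Real.rpow_nonneg (by positivity) _
      rw [Real.one_rpow]
      have heq : ((1 + (K : ℝ)) ^ (-s + 1) - 1) / (-s + 1) =
          (1 - (1 + (K : ℝ)) ^ (-s + 1)) / (s - 1) := by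
        rw [div_eq_div_iff (by linarith) (by linarith)]
        ring
      rw [heq]
      exact div_le_div_of_nonneg_right (by linarith) (by linarith) |>.trans_eq rfl
    exact h1.trans hint
  have htail : ∑' i : ℕ, ((((i : ℕ) : ℝ) + 2) ^ s)⁻¹ ≤ 1 / (s - 1) :=
    Real.tsum_le_of_sum_range_le (fun n => inv_nonneg.mpr (Real.rpow_nonneg (by positivity) _)) key
  have hsplit := Summable.sum_add_tsum_nat_add (f := fun n : ℕ => ((n : ℝ) ^ s)⁻¹) 2 hN.summable
  have hsum2 : ∑ i ∈ Finset.range 2, (((i : ℕ) : ℝ) ^ s)⁻¹ = 1 := by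
    rw [Finset.sum_range_succ, Finset.sum_range_one]
    simp [Real.zero_rpow (show s ≠ 0 by linarith)]
  have hcast : (fun i : ℕ => (((i + 2 : ℕ) : ℝ) ^ s)⁻¹) = fun i : ℕ => ((((i : ℕ) : ℝ) + 2) ^ s)⁻¹ := by
    funext i; push_cast; ring_nf
  rw [hN.tsum_eq] at hsplit
  rw [hsum2] at hsplit
  have : rzeta s = 1 + ∑' i : ℕ, ((((i : ℕ) : ℝ) + 2) ^ s)⁻¹ := by
    rw [← hsplit]
    congr 1
    exact congrArg tsum hcast
  rw [this]
  linarith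




variable {P : ℕ+ → 𝓗 →L[ℂ] 𝓗}

lemma inner_P_move (hsa : ∀ n, IsSelfAdjoint (P n)) (n : ℕ+) (x y : 𝓗) :
    ⟪P n x, y⟫_ℂ = ⟪x, P n y⟫_ℂ := by
  conv_lhs => rw [← ContinuousLinearMap.isSelfAdjoint_iff'.mp (hsa n)]
  exact ContinuousLinearMap.adjoint_inner_left _ _ _

lemma P_idem (hid : ∀ n, (P n).comp (P n) = P n) (n : ℕ+) (x : 𝓗) :
    P n (P n x) = P n x := by
  have := congrArg (fun T : 𝓗 →L[ℂ] 𝓗 => T x) (hid n)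
  simpa using this

lemma P_orth (ho : ∀ m n, m ≠ n → (P m).comp (P n) = 0) {m n : ℕ+} (h : m ≠ n) (x : 𝓗) :
    P m (P n x) = 0 := by
  have := congrArg (fun T : 𝓗 →L[ℂ] 𝓗 => T x) (ho m n h)
  simpa using this

lemma norm_P_le (hsa : ∀ n, IsSelfAdjoint (P n)) (hid : ∀ n, (P n).comp (P n) = P n)
    (n : ℕ+) (x : 𝓗) : ‖P n x‖ ≤ ‖x‖ := by
  have h2 : ((‖P n x‖ ^ 2 : ℝ) : ℂ) = ⟪x, P n x⟫_ℂ := by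
    have hh := inner_self_eq_norm_sq_to_K (𝕜 := ℂ) (P n x)
    rw [inner_P_move hsa, P_idem hid] at hh
    rw [Complex.ofReal_pow]
    exact hh.symm
  have h5 : ‖P n x‖ ^ 2 ≤ ‖x‖ * ‖P n x‖ := by
    calc ‖P n x‖ ^ 2 = ‖((‖P n x‖ ^ 2 : ℝ) : ℂ)‖ := by
          rw [Complex.norm_real, Real.norm_of_nonneg (sq_nonneg _)]
      _ = ‖(⟪x, P n x⟫_ℂ)‖ := by rw [h2]
      _ ≤ ‖x‖ * ‖P n x‖ := norm_inner_le_norm _ _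
  nlinarith [norm_nonneg (P n x), norm_nonneg x]

lemma pythagoras_finset (hsa : ∀ n, IsSelfAdjoint (P n)) (hid : ∀ n, (P n).comp (P n) = P n)
    (ho : ∀ m n, m ≠ n → (P m).comp (P n) = 0) (ψ : 𝓗) (u : Finset ℕ+) :
    ∑ n ∈ u, ‖P n ψ‖ ^ 2 ≤ ‖ψ‖ ^ 2 := by
  set v := ∑ n ∈ u, P n ψ with hv
  have hcross : ∀ i ∈ u, ∀ j ∈ u, j ≠ i → (⟪P i ψ, P j ψ⟫_ℂ) = 0 := by
    intro i _ j _ hij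
    rw [inner_P_move hsa, P_orth ho (Ne.symm hij), inner_zero_right]
  have hvv : (⟪v, v⟫_ℂ) = ∑ i ∈ u, ⟪P i ψ, P i ψ⟫_ℂ := by
    rw [hv, sum_inner]
    refine Finset.sum_congr rfl fun i hi => ?_
    rw [inner_sum]
    rw [Finset.sum_eq_single_of_mem i hi (fun j hj hij => hcross i hi j hj hij)]
  have hsumc : ∑ i ∈ u, (⟪P i ψ, P i ψ⟫_ℂ) = ((∑ i ∈ u, ‖P i ψ‖ ^ 2 : ℝ) : ℂ) := by
    push_cast
    exact Finset.sum_congr rfl fun i _ => by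
      rw [inner_self_eq_norm_sq_to_K]; norm_num
  have hnv : ‖v‖ ^ 2 = ∑ i ∈ u, ‖P i ψ‖ ^ 2 := by
    have h7 : ((‖v‖ ^ 2 : ℝ) : ℂ) = ((∑ i ∈ u, ‖P i ψ‖ ^ 2 : ℝ) : ℂ) := by
      rw [← hsumc, ← hvv, inner_self_eq_norm_sq_to_K]; norm_num
    exact_mod_cast h7
  have hx : ((∑ i ∈ u, ‖P i ψ‖ ^ 2 : ℝ) : ℂ) = ⟪ψ, v⟫_ℂ := by
    rw [hv, inner_sum, ← hsumc]
    refine Finset.sum_congr rfl fun i _ => ?_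
    rw [inner_P_move hsa, P_idem hid]
  have h6 : ∑ i ∈ u, ‖P i ψ‖ ^ 2 ≤ ‖ψ‖ * ‖v‖ := by
    have hXnn : 0 ≤ ∑ i ∈ u, ‖P i ψ‖ ^ 2 :=
      Finset.sum_nonneg fun i _ => sq_nonneg _
    calc ∑ i ∈ u, ‖P i ψ‖ ^ 2 = ‖((∑ i ∈ u, ‖P i ψ‖ ^ 2 : ℝ) : ℂ)‖ := by
          rw [Complex.norm_real, Real.norm_of_nonneg hXnn]
      _ = ‖(⟪ψ, v⟫_ℂ)‖ := by rw [hx]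
      _ ≤ ‖ψ‖ * ‖v‖ := norm_inner_le_norm _ _
  nlinarith [norm_nonneg v, norm_nonneg ψ, hnv, h6,
    Finset.sum_nonneg (fun i (_ : i ∈ u) => sq_nonneg ‖P i ψ‖)]

lemma bessel (hsa : ∀ n, IsSelfAdjoint (P n)) (hid : ∀ n, (P n).comp (P n) = P n)
    (ho : ∀ m n, m ≠ n → (P m).comp (P n) = 0) (ψ : 𝓗) :
    Summable (fun n : ℕ+ => ‖P n ψ‖ ^ 2) ∧ ∑' n : ℕ+, ‖P n ψ‖ ^ 2 ≤ ‖ψ‖ ^ 2 := by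
  have h := pythagoras_finset hsa hid ho ψ
  have hs : Summable (fun n : ℕ+ => ‖P n ψ‖ ^ 2) :=
    summable_of_sum_le (fun n => sq_nonneg _) h
  exact ⟨hs, Summable.tsum_le_of_sum_le hs h⟩

/-- Orthogonal family of ranges. -/
lemma orthFam (hsa : ∀ n, IsSelfAdjoint (P n)) (hid : ∀ n, (P n).comp (P n) = P n)
    (ho : ∀ m n, m ≠ n → (P m).comp (P n) = 0) :
    OrthogonalFamily ℂ (fun n : ℕ+ => LinearMap.range (P n : 𝓗 →ₗ[ℂ] 𝓗))
      (fun n => (LinearMap.range (P n : 𝓗 →ₗ[ℂ] 𝓗)).subtypeₗᵢ) := by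
  intro i j hij x y
  obtain ⟨a, ha⟩ := x.2
  obtain ⟨b, hb⟩ := y.2
  have hx : P i (x : 𝓗) = x := by rw [← ha]; exact P_idem hid i a
  have hy : P j (y : 𝓗) = y := by rw [← hb]; exact P_idem hid j b
  have : (⟪(x : 𝓗), (y : 𝓗)⟫_ℂ) = 0 := by
    rw [← hx, inner_P_move hsa, ← hy, P_orth ho hij, inner_zero_right]
  simpa using this





/-- An orthogonal series with square-summable norms is summable, with norm control. -/
lemma orthosum (hsa : ∀ n, IsSelfAdjoint (P n)) (hid : ∀ n, (P n).comp (P n) = P n)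
    (ho : ∀ m n, m ≠ n → (P m).comp (P n) = 0)
    (f : ℕ+ → 𝓗) (hmem : ∀ m, P m (f m) = f m)
    (hsq : Summable fun m => ‖f m‖ ^ 2) :
    Summable f ∧ ∀ u : Finset ℕ+, ‖∑ m ∈ u, f m‖ ^ 2 = ∑ m ∈ u, ‖f m‖ ^ 2 := by
  classical
  set G := fun n : ℕ+ => LinearMap.range (P n : 𝓗 →ₗ[ℂ] 𝓗) with hG
  have hOF := orthFam hsa hid ho
  set l : ∀ n, G n := fun n => ⟨f n, ⟨f n, hmem n⟩⟩ with hl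
  have hVl : ∀ n, ((G n).subtypeₗᵢ) (l n) = f n := fun n => rfl
  have hnl : ∀ n, ‖l n‖ = ‖f n‖ := fun n => rfl
  constructor
  · have := (hOF.summable_iff_norm_sq_summable l).mpr (by simpa [hnl] using hsq)
    simpa [hVl] using this
  · intro u
    have := hOF.norm_sum l u
    simpa [hVl, hnl] using this

/-- Cauchy–Schwarz for tsums. -/
lemma tsum_CS {a c : ℕ+ → ℝ} (ha : ∀ n, 0 ≤ a n)
    (hsa : Summable a) (hsac2 : Summable fun n => a n * c n ^ 2)
    (hsac : Summable fun n => a n * c n) :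
    (∑' n, a n * c n) ^ 2 ≤ (∑' n, a n) * ∑' n, a n * c n ^ 2 := by
  have hfin : ∀ u : Finset ℕ+,
      (∑ n ∈ u, a n * c n) ^ 2 ≤ (∑' n, a n) * ∑' n, a n * c n ^ 2 := by
    intro u
    have h1 := Finset.sum_mul_sq_le_sq_mul_sq u (fun n => Real.sqrt (a n))
      (fun n => Real.sqrt (a n) * c n)
    have e1 : ∀ n, Real.sqrt (a n) * (Real.sqrt (a n) * c n) = a n * c n := fun n => by
      rw [← mul_assoc, Real.mul_self_sqrt (ha n)]
    have e2 : ∀ n, Real.sqrt (a n) ^ 2 = a n := fun n => Real.sq_sqrt (ha n)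
    have e3 : ∀ n, (Real.sqrt (a n) * c n) ^ 2 = a n * c n ^ 2 := fun n => by
      rw [mul_pow, e2]
    simp only [e1, e2, e3] at h1
    calc (∑ n ∈ u, a n * c n) ^ 2 ≤ (∑ n ∈ u, a n) * ∑ n ∈ u, a n * c n ^ 2 := h1
      _ ≤ (∑' n, a n) * ∑' n, a n * c n ^ 2 := by
          apply mul_le_mul (Summable.sum_le_tsum u (fun n _ => ha n) hsa)
            (Summable.sum_le_tsum u (fun n _ => mul_nonneg (ha n) (sq_nonneg _)) hsac2)
            (Finset.sum_nonneg fun n _ => mul_nonneg (ha n) (sq_nonneg _))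
            (tsum_nonneg fun n => ha n)
  have htend : Filter.Tendsto (fun u : Finset ℕ+ => (∑ n ∈ u, a n * c n) ^ 2)
      Filter.atTop (nhds ((∑' n, a n * c n) ^ 2)) := Filter.Tendsto.pow hsac.hasSum 2 
  exact le_of_tendsto htend (Filter.Eventually.of_forall hfin)



lemma schur_test (hsa : ∀ n, IsSelfAdjoint (P n)) (hid : ∀ n, (P n).comp (P n) = P n)
    (ho : ∀ m n, m ≠ n → (P m).comp (P n) = 0)
    (B : ℕ+ → ℕ+ → 𝓗 →L[ℂ] 𝓗)
    (hBP : ∀ m n, (P m).comp ((B m n).comp (P n)) = B m n)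
    (C : ℝ) (hC : 0 ≤ C)
    (hrow : ∀ m, Summable (fun n => ‖B m n‖) ∧ ∑' n, ‖B m n‖ ≤ C)
    (hcol : ∀ n, Summable (fun m => ‖B m n‖) ∧ ∑' m, ‖B m n‖ ≤ C) :
    ∃ A : 𝓗 →L[ℂ] 𝓗, (∀ m n, (P m).comp (A.comp (P n)) = B m n) ∧ ‖A‖ ≤ C := by
  classical
  -- basic block identities
  have hBapp : ∀ m n (ψ : 𝓗), B m n ψ = P m (B m n (P n ψ)) := by
    intro m n ψ
    have := congrArg (fun T : 𝓗 →L[ℂ] 𝓗 => T ψ) (hBP m n)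
    simpa using this.symm
  have hBnorm : ∀ m n (ψ : 𝓗), ‖B m n ψ‖ ≤ ‖B m n‖ * ‖P n ψ‖ := by
    intro m n ψ
    rw [hBapp m n ψ]
    exact (norm_P_le hsa hid m _).trans ((B m n).le_opNorm _)
  have hPB : ∀ m n (ψ : 𝓗), P m (B m n ψ) = B m n ψ := by
    intro m n ψ
    conv_lhs => rw [hBapp m n ψ, P_idem hid]
    exact (hBapp m n ψ).symm
  -- summability of rows applied to a vector
  have hrowψ : ∀ (ψ : 𝓗) (m : ℕ+), Summable fun n => B m n ψ := by
    intro ψ m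
    apply Summable.of_norm
    apply Summable.of_nonneg_of_le (fun n => norm_nonneg _)
      (fun n => (hBnorm m n ψ).trans
        (mul_le_mul_of_nonneg_left (norm_P_le hsa hid n ψ) (norm_nonneg _)))
    exact (hrow m).1.mul_right ‖ψ‖
  -- the key estimates for a fixed vector
  have key : ∀ ψ : 𝓗, Summable (fun m : ℕ+ => ∑' n, B m n ψ) ∧
      ‖∑' m : ℕ+, ∑' n, B m n ψ‖ ≤ C * ‖ψ‖ := by
    intro ψ
    set c : ℕ+ → ℝ := fun n => ‖P n ψ‖ with hc
    have hc0 : ∀ n, 0 ≤ c n := fun n => norm_nonneg _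
    have hcψ : ∀ n, c n ≤ ‖ψ‖ := fun n => norm_P_le hsa hid n ψ
    have hc2 := bessel hsa hid ho ψ
    set a : ℕ+ → ℕ+ → ℝ := fun m n => ‖B m n‖ with ha
    have ha0 : ∀ m n, 0 ≤ a m n := fun m n => norm_nonneg _
    have hsac2 : ∀ m, Summable fun n => a m n * c n ^ 2 := by
      intro m
      apply Summable.of_nonneg_of_le (fun n => mul_nonneg (ha0 m n) (sq_nonneg _))
        (fun n => mul_le_mul_of_nonneg_left
          (pow_le_pow_left₀ (hc0 n) (hcψ n) 2) (ha0 m n))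
      exact (hrow m).1.mul_right (‖ψ‖ ^ 2)
    have hsac : ∀ m, Summable fun n => a m n * c n := by
      intro m
      apply Summable.of_nonneg_of_le (fun n => mul_nonneg (ha0 m n) (hc0 n))
        (fun n => mul_le_mul_of_nonneg_left (hcψ n) (ha0 m n))
      exact (hrow m).1.mul_right ‖ψ‖
    set t : ℕ+ → ℝ := fun m => ∑' n, a m n * c n ^ 2 with hte
    -- product summability (swapped order first)
    have hswap_rows : ∀ n, Summable fun m => a m n * c n ^ 2 :=
      fun n => (hcol n).1.mul_right _
    have hswap_sums_eq : ∀ n : ℕ+, ∑' m, a m n * c n ^ 2 = (∑' m, a m n) * c n ^ 2 :=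
      fun n => tsum_mul_right
    have hswap_sums : Summable fun n => ∑' m, a m n * c n ^ 2 := by
      apply Summable.of_nonneg_of_le
        (fun n => tsum_nonneg fun m => mul_nonneg (ha0 m n) (sq_nonneg _))
        (fun n => ?_) (hc2.1.mul_left C)
      rw [hswap_sums_eq n]
      exact mul_le_mul_of_nonneg_right ((hcol n).2) (sq_nonneg _)
    have hgswap : Summable (fun q : ℕ+ × ℕ+ => a q.2 q.1 * c q.1 ^ 2) :=
      (summable_prod_of_nonneg
        (fun q => mul_nonneg (ha0 q.2 q.1) (sq_nonneg _))).mpr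
        ⟨fun n => hswap_rows n, hswap_sums⟩
    have hgprod : Summable (fun q : ℕ+ × ℕ+ => a q.1 q.2 * c q.2 ^ 2) := by
      have := hgswap.prod_symm
      simpa using this
    have ht : Summable t := ((summable_prod_of_nonneg
      (fun q => mul_nonneg (ha0 q.1 q.2) (sq_nonneg _))).mp hgprod).2
    have htsum : ∑' m, t m ≤ C * ‖ψ‖ ^ 2 := by
      have h1 : ∑' m, t m = ∑' q : ℕ+ × ℕ+, a q.1 q.2 * c q.2 ^ 2 :=
        (Summable.tsum_prod' hgprod fun m => hsac2 m).symm
      have h2 : ∑' q : ℕ+ × ℕ+, a q.1 q.2 * c q.2 ^ 2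
          = ∑' n, ∑' m, a m n * c n ^ 2 := by
        rw [← (Equiv.prodComm ℕ+ ℕ+).tsum_eq (fun q : ℕ+ × ℕ+ => a q.1 q.2 * c q.2 ^ 2)]
        exact Summable.tsum_prod' hgswap fun n => hswap_rows n
      rw [h1, h2]
      calc ∑' n, ∑' m, a m n * c n ^ 2 ≤ ∑' n, C * c n ^ 2 := by
            apply Summable.tsum_le_tsum _ hswap_sums (hc2.1.mul_left C)
            intro n
            rw [hswap_sums_eq n]
            exact mul_le_mul_of_nonneg_right ((hcol n).2) (sq_nonneg _)
        _ = C * ∑' n, c n ^ 2 := by rw [tsum_mul_left]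
        _ ≤ C * ‖ψ‖ ^ 2 := mul_le_mul_of_nonneg_left hc2.2 hC
    -- bound for each row sum
    set F : ℕ+ → 𝓗 := fun m => ∑' n, B m n ψ with hFdef
    have hFnorm : ∀ m, ‖F m‖ ≤ ∑' n, a m n * c n := by
      intro m
      have hn : Summable fun n => ‖B m n ψ‖ :=
        Summable.of_nonneg_of_le (fun n => norm_nonneg _) (fun n => hBnorm m n ψ) (hsac m)
      calc ‖F m‖ ≤ ∑' n, ‖B m n ψ‖ := norm_tsum_le_tsum_norm hn
        _ ≤ ∑' n, a m n * c n := Summable.tsum_le_tsum (fun n => hBnorm m n ψ) hn (hsac m)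
    have hFsq : ∀ m, ‖F m‖ ^ 2 ≤ C * t m := by
      intro m
      have h1 : ‖F m‖ ^ 2 ≤ (∑' n, a m n * c n) ^ 2 :=
        pow_le_pow_left₀ (norm_nonneg _) (hFnorm m) 2
      have h2 := tsum_CS (ha0 m) (hrow m).1 (hsac2 m) (hsac m)
      have h3 : (∑' n, a m n) * t m ≤ C * t m :=
        mul_le_mul_of_nonneg_right ((hrow m).2)
          (tsum_nonneg fun n => mul_nonneg (ha0 m n) (sq_nonneg _))
      exact h1.trans (h2.trans h3)
    have hFsqsum : Summable fun m => ‖F m‖ ^ 2 :=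
      Summable.of_nonneg_of_le (fun m => sq_nonneg _) hFsq (ht.mul_left C)
    have hFtot : ∑' m, ‖F m‖ ^ 2 ≤ (C * ‖ψ‖) ^ 2 := by
      calc ∑' m, ‖F m‖ ^ 2 ≤ ∑' m, C * t m :=
            Summable.tsum_le_tsum hFsq hFsqsum (ht.mul_left C)
        _ = C * ∑' m, t m := by rw [tsum_mul_left]
        _ ≤ C * (C * ‖ψ‖ ^ 2) := mul_le_mul_of_nonneg_left htsum hC
        _ = (C * ‖ψ‖) ^ 2 := by ring
    have hFmem : ∀ m, P m (F m) = F m := by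
      intro m
      rw [hFdef]
      simp only
      rw [(P m).map_tsum (hrowψ ψ m)]
      exact tsum_congr fun n => hPB m n ψ
    obtain ⟨hFsummable, hPyth⟩ := orthosum hsa hid ho F hFmem hFsqsum
    refine ⟨hFsummable, ?_⟩
    have hparts : ∀ u : Finset ℕ+, ‖∑ m ∈ u, F m‖ ≤ C * ‖ψ‖ := by
      intro u
      have h1 : ‖∑ m ∈ u, F m‖ ^ 2 ≤ (C * ‖ψ‖) ^ 2 := by
        rw [hPyth u]
        exact (Summable.sum_le_tsum u (fun m _ => sq_nonneg _) hFsqsum).trans hFtot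
      nlinarith [norm_nonneg (∑ m ∈ u, F m), mul_nonneg hC (norm_nonneg ψ)]
    have htend : Filter.Tendsto (fun u : Finset ℕ+ => ‖∑ m ∈ u, F m‖)
        Filter.atTop (nhds ‖∑' m, F m‖) := hFsummable.hasSum.norm
    exact le_of_tendsto htend (Filter.Eventually.of_forall hparts)
  -- the linear map
  set T : 𝓗 →ₗ[ℂ] 𝓗 :=
    { toFun := fun ψ => ∑' m : ℕ+, ∑' n, B m n ψ
      map_add' := by
        intro ψ φ
        have hin : ∀ m, (∑' n, B m n (ψ + φ)) = (∑' n, B m n ψ) + ∑' n, B m n φ := by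
          intro m
          rw [← Summable.tsum_add (hrowψ ψ m) (hrowψ φ m)]
          exact tsum_congr fun n => (B m n).map_add ψ φ
        calc (∑' m : ℕ+, ∑' n, B m n (ψ + φ))
            = ∑' m : ℕ+, ((∑' n, B m n ψ) + ∑' n, B m n φ) := tsum_congr hin
          _ = (∑' m : ℕ+, ∑' n, B m n ψ) + ∑' m : ℕ+, ∑' n, B m n φ :=
              Summable.tsum_add (key ψ).1 (key φ).1
      map_smul' := by
        intro z ψ
        have hin : ∀ m, (∑' n, B m n (z • ψ)) = z • ∑' n, B m n ψ := by
          intro m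
          rw [← ((hrowψ ψ m).hasSum.const_smul z).tsum_eq]
          exact tsum_congr fun n => (B m n).map_smul z ψ
        calc (∑' m : ℕ+, ∑' n, B m n (z • ψ))
            = ∑' m : ℕ+, z • ∑' n, B m n ψ := tsum_congr hin
          _ = z • ∑' m : ℕ+, ∑' n, B m n ψ := ((key ψ).1.hasSum.const_smul z).tsum_eq
        } with hT
  have hTbound : ∀ ψ, ‖T ψ‖ ≤ C * ‖ψ‖ := fun ψ => (key ψ).2
  set A : 𝓗 →L[ℂ] 𝓗 := T.mkContinuous C hTbound with hA
  have hAapp : ∀ ψ, A ψ = ∑' m : ℕ+, ∑' n, B m n ψ := fun ψ => rfl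
  refine ⟨A, ?_, LinearMap.mkContinuous_norm_le T hC hTbound⟩
  intro m n
  ext ψ
  simp only [ContinuousLinearMap.comp_apply]
  rw [hAapp]
  have hin : ∀ k : ℕ+, (∑' l, B k l (P n ψ)) = B k n ψ := by
    intro k
    rw [tsum_eq_single n ?_]
    · rw [hBapp k n (P n ψ), P_idem hid, ← hBapp k n ψ]
    · intro l hl
      rw [hBapp k l (P n ψ), P_orth ho hl ψ]
      simp
  rw [tsum_congr hin]
  have hcolsum : Summable fun k => B k n ψ := by
    apply Summable.of_norm
    apply Summable.of_nonneg_of_le (fun k => norm_nonneg _)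
      (fun k => (hBnorm k n ψ).trans
        (mul_le_mul_of_nonneg_left (norm_P_le hsa hid n ψ) (norm_nonneg _)))
    exact (hcol n).1.mul_right ‖ψ‖
  rw [(P m).map_tsum hcolsum]
  rw [tsum_eq_single m ?_]
  · exact hPB m n ψ
  · intro k hk
    rw [hBapp k n ψ, P_orth ho (Ne.symm hk)]


end Statement13Helpers

set_option maxHeartbeats 1000000 in
/-- Remark (iii) after Definition 2.1: the Schur–Holmgren bound for
matrices with finite `‖·‖_{p,δ}` norm. -/
theorem statement13
    (P : ℕ+ → 𝓗 →L[ℂ] 𝓗) (hP : ProjFamily P)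
    (p δ : ℝ) (hp : 1 ≤ p) (hδ : 0 ≤ δ) (hpδ : 1 < p + 2 * δ) :
    (∀ m : ℕ+,
      Summable (fun n : ℕ+ =>
        1 / (jap (((m : ℕ) : ℝ) - ((n : ℕ) : ℝ)) ^ p *
          (((max m n : ℕ+) : ℕ) : ℝ) ^ (2 * δ))) ∧
      ∑' n : ℕ+,
          1 / (jap (((m : ℕ) : ℝ) - ((n : ℕ) : ℝ)) ^ p *
            (((max m n : ℕ+) : ℕ) : ℝ) ^ (2 * δ)) ≤
        2 + 1 / (p + 2 * δ - 1) + rzeta (p + 2 * δ)) ∧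
    (∀ (B : ℕ+ → ℕ+ → 𝓗 →L[ℂ] 𝓗) (N : ℝ),
      (∀ m n : ℕ+, (P m).comp ((B m n).comp (P n)) = B m n) →
      (∀ m n : ℕ+,
        jap (((m : ℕ) : ℝ) - ((n : ℕ) : ℝ)) ^ p * (((max m n : ℕ+) : ℕ) : ℝ) ^ (2 * δ) *
          ‖B m n‖ ≤ N) →
      ∃ A : 𝓗 →L[ℂ] 𝓗, (∀ m n : ℕ+, (P m).comp (A.comp (P n)) = B m n) ∧
        ‖A‖ ≤ (2 + 1 / (p + 2 * δ - 1) + rzeta (p + 2 * δ)) * N) := by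
  obtain ⟨hsa, hid, ho, -, -⟩ := hP
  have hzle := rzeta_le hpδ
  have hz0 : 0 ≤ rzeta (p + 2 * δ) := rzeta_nonneg
  have hs0 : 0 < p + 2 * δ - 1 := by linarith
  have part1 : ∀ m : ℕ+,
      Summable (fun n : ℕ+ =>
        1 / (jap (((m : ℕ) : ℝ) - ((n : ℕ) : ℝ)) ^ p *
          (((max m n : ℕ+) : ℕ) : ℝ) ^ (2 * δ))) ∧
      ∑' n : ℕ+,
          1 / (jap (((m : ℕ) : ℝ) - ((n : ℕ) : ℝ)) ^ p *
            (((max m n : ℕ+) : ℕ) : ℝ) ^ (2 * δ)) ≤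
        2 + 1 / (p + 2 * δ - 1) + rzeta (p + 2 * δ) := by
    intro m
    obtain ⟨h1, h2⟩ := rowsum hδ hpδ m
    exact ⟨h1, h2.trans (by linarith)⟩
  refine ⟨part1, ?_⟩
  intro B N hBeq hBle
  set w : ℕ+ → ℕ+ → ℝ := fun m n =>
    jap (((m : ℕ) : ℝ) - ((n : ℕ) : ℝ)) ^ p * (((max m n : ℕ+) : ℕ) : ℝ) ^ (2 * δ) with hw
  have hwpos : ∀ m n : ℕ+, 0 < w m n := fun m n => weight_pos m n
  have hN0 : 0 ≤ N :=
    le_trans (mul_nonneg (hwpos 1 1).le (norm_nonneg _)) (hBle 1 1)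
  set K : ℝ := 2 + 1 / (p + 2 * δ - 1) + rzeta (p + 2 * δ) with hK
  have hK0 : 0 ≤ K := by
    have h4 : 0 ≤ 1 / (p + 2 * δ - 1) := by positivity
    simp only [hK]; linarith
  have hwsymm : ∀ m n : ℕ+, w m n = w n m := by
    intro m n
    simp only [hw]
    congr 1
    · congr 1
      rw [show ((m : ℕ) : ℝ) - ((n : ℕ) : ℝ) = -(((n : ℕ) : ℝ) - ((m : ℕ) : ℝ)) by ring,
        jap_neg]
    · rw [max_comm]
  have hble' : ∀ m n : ℕ+, ‖B m n‖ ≤ N * (1 / w m n) := by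
    intro m n
    rw [mul_one_div, le_div_iff₀ (hwpos m n), mul_comm]
    exact hBle m n
  have hrowB : ∀ m : ℕ+, Summable (fun n => ‖B m n‖) ∧ ∑' n, ‖B m n‖ ≤ K * N := by
    intro m
    obtain ⟨h1, h2⟩ := rowsum hδ hpδ m
    have h1' : Summable fun n => 1 / w m n := h1
    have h2' : ∑' n, 1 / w m n ≤ K := le_trans h2 (by simp only [hK]; linarith)
    have hsummable : Summable fun n => ‖B m n‖ :=
      Summable.of_nonneg_of_le (fun n => norm_nonneg _) (fun n => hble' m n)
        (h1'.mul_left N)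
    refine ⟨hsummable, ?_⟩
    calc ∑' n, ‖B m n‖ ≤ ∑' n, N * (1 / w m n) :=
          Summable.tsum_le_tsum (fun n => hble' m n) hsummable (h1'.mul_left N)
      _ = N * ∑' n, 1 / w m n := tsum_mul_left
      _ ≤ N * K := mul_le_mul_of_nonneg_left h2' hN0
      _ = K * N := mul_comm N K
  have hcolB : ∀ n : ℕ+, Summable (fun m => ‖B m n‖) ∧ ∑' m, ‖B m n‖ ≤ K * N := by
    intro n
    obtain ⟨h1, h2⟩ := rowsum hδ hpδ n
    have h1' : Summable fun m => 1 / w n m := h1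
    have h2' : ∑' m, 1 / w n m ≤ K := le_trans h2 (by simp only [hK]; linarith)
    have hble'' : ∀ m : ℕ+, ‖B m n‖ ≤ N * (1 / w n m) := by
      intro m
      have h := hble' m n
      rwa [hwsymm m n] at h
    have hsummable : Summable fun m => ‖B m n‖ :=
      Summable.of_nonneg_of_le (fun m => norm_nonneg _) hble'' (h1'.mul_left N)
    refine ⟨hsummable, ?_⟩
    calc ∑' m, ‖B m n‖ ≤ ∑' m, N * (1 / w n m) :=
          Summable.tsum_le_tsum hble'' hsummable (h1'.mul_left N)
      _ = N * ∑' m, 1 / w n m := tsum_mul_left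
      _ ≤ N * K := mul_le_mul_of_nonneg_left h2' hN0
      _ = K * N := mul_comm N K
  obtain ⟨A, hA1, hA2⟩ := schur_test hsa hid ho B hBeq (K * N)
    (mul_nonneg hK0 hN0) hrowB hcolB
  exact ⟨A, hA1, hA2⟩


end
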